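/- Define S_n = Σ_{i=0}^{n-1} s_{n,i} (the total number of simple n-braids). Then S_n satisfies S_n = 2S_{n-1} + S_{n-2} + S_{n-3} + ··· + S_2 + S_1 for n ≥ 2, with S_1 = 1. -/
import Mathlib

private lemma aux_diag_sum (f : ℕ → ℕ → ℚ) (N : ℕ) :
    (∑ i ∈ Finset.range N, ∑ j ∈ Finset.range (i + 1), f j (i - j))
      = ∑ j ∈ Finset.range N, ∑ k ∈ Finset.range (N - j), f j k := by
  induction N with
  | zero => simp
  | succ N ih =>
    rw [Finset.sum_range_succ, ih, Finset.sum_range_succ]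
    have h1 : ∀ j ∈ Finset.range N,
        (∑ k ∈ Finset.range (N + 1 - j), f j k)
          = (∑ k ∈ Finset.range (N - j), f j k) + f j (N - j) := by
      intro j hj
      have hj' : j < N := Finset.mem_range.mp hj
      have h : N + 1 - j = (N - j) + 1 := by omega
      rw [h, Finset.sum_range_succ]
    have hR : (∑ j ∈ Finset.range (N + 1), ∑ k ∈ Finset.range (N + 1 - j), f j k)
        = (∑ j ∈ Finset.range N, ∑ k ∈ Finset.range (N - j), f j k)
          + ∑ j ∈ Finset.range (N + 1), f j (N - j) := by
      rw [Finset.sum_range_succ, Finset.sum_congr rfl h1, Finset.sum_add_distrib,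
        Finset.sum_range_succ (fun j => f j (N - j))]
      have h2 : N + 1 - N = 1 := by omega
      rw [h2, Nat.sub_self]
      simp [Finset.sum_range_succ]
      ring
    rw [hR, Finset.sum_range_succ (fun j => f j (N - j))]

/-- Let `S_n = Σ_{i=0}^{n-1} s_{n,i}` be the total number of simple `n`-braids. Then
`S_n = 2S_{n-1} + S_{n-2} + ⋯ + S_2 + S_1` for `n ≥ 2`, with `S_1 = 1`. -/
theorem simple_braid_total_recurrence (s : ℕ → ℕ → ℚ)
    (h0 : ∀ n, 1 ≤ n → s n 0 = 1)
    (hz : ∀ n i, n ≤ i → s n i = 0)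
    (hrec : ∀ n i, 1 ≤ i → i < n →
      s n i = s (n - 1) i + ∑ j ∈ Finset.Icc 1 i, s (n - j) (i - j)) :
    (∑ i ∈ Finset.range 1, s 1 i) = 1 ∧
    ∀ n : ℕ, 2 ≤ n →
      (∑ i ∈ Finset.range n, s n i)
        = 2 * (∑ i ∈ Finset.range (n - 1), s (n - 1) i)
          + ∑ j ∈ Finset.Icc 1 (n - 2), ∑ i ∈ Finset.range j, s j i := by
  constructor
  · simp [h0 1 le_rfl]
  · intro n hn
    obtain ⟨m, rfl⟩ : ∃ m, n = m + 2 := ⟨n - 2, by omega⟩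
    have e1 : m + 2 - 1 = m + 1 := by omega
    have e2 : m + 2 - 2 = m := by omega
    rw [e1, e2]
    set S : ℚ := ∑ i ∈ Finset.range (m + 1), s (m + 1) i with hS
    -- rewrite each s (m+2) (i+1) via the recurrence
    have hrec' : ∀ i ∈ Finset.range (m + 1),
        s (m + 2) (i + 1)
          = s (m + 1) (i + 1) + ∑ j ∈ Finset.range (i + 1), s (m + 1 - j) (i - j) := by
      intro i hi
      have hi' : i < m + 1 := Finset.mem_range.mp hi
      rw [hrec (m + 2) (i + 1) (by omega) (by omega)]
      rw [show m + 2 - 1 = m + 1 from by omega]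
      congr 1
      rw [← Finset.Ico_add_one_right_eq_Icc, Finset.sum_Ico_eq_sum_range]
      apply Finset.sum_congr rfl
      intro j hj
      congr 1 <;> omega
    -- expand the LHS
    rw [Finset.sum_range_succ' (fun i => s (m + 2) i) (m + 1),
      Finset.sum_congr rfl hrec', Finset.sum_add_distrib]
    -- term A
    have hA : (∑ i ∈ Finset.range (m + 1), s (m + 1) (i + 1)) = S - 1 := by
      rw [hS, Finset.sum_range_succ' (fun i => s (m + 1) i) m, Finset.sum_range_succ,
        hz (m + 1) (m + 1) le_rfl, h0 (m + 1) (by omega)]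
      ring
    -- term B
    have hB : (∑ i ∈ Finset.range (m + 1), ∑ j ∈ Finset.range (i + 1), s (m + 1 - j) (i - j))
        = S + ∑ j ∈ Finset.Icc 1 m, ∑ i ∈ Finset.range j, s j i := by
      rw [aux_diag_sum (fun j k => s (m + 1 - j) k) (m + 1)]
      have hrefl : (∑ j ∈ Finset.range (m + 1), ∑ k ∈ Finset.range (m + 1 - j), s (m + 1 - j) k)
          = ∑ j ∈ Finset.range (m + 1), ∑ k ∈ Finset.range (j + 1), s (j + 1) k := by
        rw [← Finset.sum_range_reflect (fun j => ∑ k ∈ Finset.range (j + 1), s (j + 1) k) (m + 1)]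
        apply Finset.sum_congr rfl
        intro j hj
        have hj' : j < m + 1 := Finset.mem_range.mp hj
        have h : m + 1 - 1 - j + 1 = m + 1 - j := by omega
        rw [h]
      rw [hrefl, Finset.sum_range_succ]
      have hicc : (∑ j ∈ Finset.Icc 1 m, ∑ i ∈ Finset.range j, s j i)
          = ∑ j ∈ Finset.range m, ∑ k ∈ Finset.range (j + 1), s (j + 1) k := by
        rw [← Finset.Ico_add_one_right_eq_Icc, Finset.sum_Ico_eq_sum_range]
        apply Finset.sum_congr rfl
        intro j hj
        rw [show 1 + j = j + 1 from by omega]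
      rw [hicc, hS]
      ring
    rw [hA, hB, h0 (m + 2) (by omega)]
    ring
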